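/- In the algebra B_2 = Q⟨⟨X,Y⟩⟩/⟨X^2, Y^2⟩, modulo the additional two-sided ideal generated by the element w = (XY)^2 - (YX)^2 Y + r(XY)^3 - r^2 (YX)^3 - 2 r^2 (YX)^3 Y (for a fixed positive integer r), the elements (YX)^2 Y, (XY)^2 X, and (XY)^2 all vanish; consequently the ideal generated by w equals the ideal generated by (XY)^2, and the quotient B_2/⟨(XY)^2⟩ is an 8-dimensional Q-vector space with basis 1, X, Y, XY, YX, XYX, YXY, (YX)^2. -/

import Mathlib

/- A faithful concrete model of `B₂ = ℚ⟨⟨X,Y⟩⟩/⟨X²,Y²⟩`, the quotient of the formal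
power series algebra in two noncommuting variables X, Y by the two-sided ideal
generated by X² and Y².  `B₂` has topological ℚ-basis the alternating words
`1, X, Y, XY, YX, XYX, YXY, …`.  Sending `X ↦ u·E₀₁`, `Y ↦ u·E₁₀` in the 2×2
matrices over `ℚ[[u]]` identifies `B₂` with the subalgebra of matrices
`[[f, g], [h, e]]` where `f, e` are even power series with the same constant term
and `g, h` are odd power series; a word of length `n` corresponds to a matrix with
single entry `u^n` (e.g. `(XY)^k ↦ u^{2k}·E₀₀`, `(XY)^k X ↦ u^{2k+1}·E₀₁`). -/

namespace B2Model

open PowerSeries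

abbrev R := PowerSeries ℚ
abbrev A := Matrix (Fin 2) (Fin 2) R

private lemma parity_odd {p q : ℕ} (hn : Odd (p + q)) :
    (Odd p ∧ Even q) ∨ (Even p ∧ Odd q) := by
  rcases Nat.even_or_odd p with hp | hp <;> rcases Nat.even_or_odd q with hq | hq <;>
    simp [Nat.even_iff, Nat.odd_iff] at * <;> omega

private lemma parity_even {p q : ℕ} (hn : Even (p + q)) :
    (Even p ∧ Even q) ∨ (Odd p ∧ Odd q) := by
  rcases Nat.even_or_odd p with hp | hp <;> rcases Nat.even_or_odd q with hq | hq <;>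
    simp [Nat.even_iff, Nat.odd_iff] at * <;> omega

/-- The defining conditions: diagonal entries even with equal constant terms,
off-diagonal entries odd. -/
def cond (M : A) : Prop :=
  (∀ n, Odd n → coeff n (M 0 0) = 0) ∧
  (∀ n, Odd n → coeff n (M 1 1) = 0) ∧
  (∀ n, Even n → coeff n (M 0 1) = 0) ∧
  (∀ n, Even n → coeff n (M 1 0) = 0) ∧
  constantCoeff (M 0 0) = constantCoeff (M 1 1)

private lemma coeff_mul_zero_left {φ ψ : R} {n : ℕ}
    (h : ∀ p q : ℕ, p + q = n → coeff p φ = 0 ∨ coeff q ψ = 0) :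
    coeff n (φ * ψ) = 0 := by
  rw [PowerSeries.coeff_mul]
  refine Finset.sum_eq_zero fun pq hpq => ?_
  rcases h pq.1 pq.2 (Finset.HasAntidiagonal.mem_antidiagonal.mp hpq) with h0 | h0 <;>
    simp [h0]

/-- The model of `B₂` as a subalgebra of `M₂(ℚ[[u]])`. -/
noncomputable def S : Subalgebra ℚ A where
  carrier := {M | cond M}
  zero_mem' := by simp [cond]
  add_mem' := by
    rintro M N ⟨h1, h2, h3, h4, h5⟩ ⟨g1, g2, g3, g4, g5⟩
    exact ⟨fun n hn => by simp [Matrix.add_apply, h1 n hn, g1 n hn],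
      fun n hn => by simp [Matrix.add_apply, h2 n hn, g2 n hn],
      fun n hn => by simp [Matrix.add_apply, h3 n hn, g3 n hn],
      fun n hn => by simp [Matrix.add_apply, h4 n hn, g4 n hn],
      by simp [Matrix.add_apply, h5, g5]⟩
  one_mem' := by
    refine ⟨fun n hn => ?_, fun n hn => ?_, fun n hn => ?_, fun n hn => ?_, ?_⟩ <;>
      simp [Matrix.one_apply, PowerSeries.coeff_one]
    · intro h; subst h; simp [Nat.odd_iff] at hn
    · intro h; subst h; simp [Nat.odd_iff] at hn
  mul_mem' := by
    rintro M N ⟨h1, h2, h3, h4, h5⟩ ⟨g1, g2, g3, g4, g5⟩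
    have key : ∀ (φ ψ : R) (n : ℕ),
        ((∀ m, Odd m → coeff m φ = 0) ∧ (∀ m, Odd m → coeff m ψ = 0) ∧ Odd n) ∨
        ((∀ m, Even m → coeff m φ = 0) ∧ (∀ m, Even m → coeff m ψ = 0) ∧ Odd n) ∨
        ((∀ m, Odd m → coeff m φ = 0) ∧ (∀ m, Even m → coeff m ψ = 0) ∧ Even n) ∨
        ((∀ m, Even m → coeff m φ = 0) ∧ (∀ m, Odd m → coeff m ψ = 0) ∧ Even n) →
        coeff n (φ * ψ) = 0 := by
      intro φ ψ n h
      apply coeff_mul_zero_left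
      intro p q hpq
      rcases h with ⟨hφ, hψ, hn⟩ | ⟨hφ, hψ, hn⟩ | ⟨hφ, hψ, hn⟩ | ⟨hφ, hψ, hn⟩ <;>
        subst hpq
      · rcases parity_odd hn with ⟨hp, hq⟩ | ⟨hp, hq⟩
        · exact Or.inl (hφ _ hp)
        · exact Or.inr (hψ _ hq)
      · rcases parity_odd hn with ⟨hp, hq⟩ | ⟨hp, hq⟩
        · exact Or.inr (hψ _ hq)
        · exact Or.inl (hφ _ hp)
      · rcases parity_even hn with ⟨hp, hq⟩ | ⟨hp, hq⟩
        · exact Or.inr (hψ _ hq)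
        · exact Or.inl (hφ _ hp)
      · rcases parity_even hn with ⟨hp, hq⟩ | ⟨hp, hq⟩
        · exact Or.inl (hφ _ hp)
        · exact Or.inr (hψ _ hq)
    refine ⟨fun n hn => ?_, fun n hn => ?_, fun n hn => ?_, fun n hn => ?_, ?_⟩
    · rw [Matrix.mul_apply, Fin.sum_univ_two, map_add]
      rw [key _ _ n (Or.inl ⟨h1, g1, hn⟩), key _ _ n (Or.inr (Or.inl ⟨h3, g4, hn⟩)),
        add_zero]
    · rw [Matrix.mul_apply, Fin.sum_univ_two, map_add]
      rw [key _ _ n (Or.inr (Or.inl ⟨h4, g3, hn⟩)), key _ _ n (Or.inl ⟨h2, g2, hn⟩),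
        add_zero]
    · rw [Matrix.mul_apply, Fin.sum_univ_two, map_add]
      rw [key _ _ n (Or.inr (Or.inr (Or.inl ⟨h1, g3, hn⟩))),
        key _ _ n (Or.inr (Or.inr (Or.inr ⟨h3, g2, hn⟩))), add_zero]
    · rw [Matrix.mul_apply, Fin.sum_univ_two, map_add]
      rw [key _ _ n (Or.inr (Or.inr (Or.inr ⟨h4, g1, hn⟩))),
        key _ _ n (Or.inr (Or.inr (Or.inl ⟨h2, g4, hn⟩))), add_zero]
    · have e01 : constantCoeff (M 0 1) = 0 := by
        simpa using h3 0 (by simp)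
      have e10' : constantCoeff (N 1 0) = 0 := by
        simpa using g4 0 (by simp)
      have e10 : constantCoeff (M 1 0) = 0 := by
        simpa using h4 0 (by simp)
      have e01' : constantCoeff (N 0 1) = 0 := by
        simpa using g3 0 (by simp)
      rw [Matrix.mul_apply, Fin.sum_univ_two, Matrix.mul_apply, Fin.sum_univ_two,
        map_add, map_add, map_mul, map_mul, map_mul, map_mul, e01, e10, e10', e01',
        h5, g5]
      ring
  algebraMap_mem' := by
    intro q
    refine ⟨fun n hn => ?_, fun n hn => ?_, fun n hn => ?_, fun n hn => ?_, ?_⟩ <;>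
      simp [Matrix.algebraMap_matrix_apply, PowerSeries.coeff_C, PowerSeries.algebraMap_apply]
    · intro h; subst h; simp [Nat.odd_iff] at hn
    · intro h; subst h; simp [Nat.odd_iff] at hn

/-- The matrix representing the generator `X`. -/
noncomputable def Xm : A := !![0, PowerSeries.X; 0, 0]

/-- The matrix representing the generator `Y`. -/
noncomputable def Ym : A := !![0, 0; PowerSeries.X, 0]

lemma Xm_mem : Xm ∈ S := by
  refine ⟨fun n hn => ?_, fun n hn => ?_, fun n hn => ?_, fun n hn => ?_, ?_⟩ <;>
    simp [Xm, PowerSeries.coeff_X]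
  intro h; subst h; simp [Nat.even_iff] at hn

lemma Ym_mem : Ym ∈ S := by
  refine ⟨fun n hn => ?_, fun n hn => ?_, fun n hn => ?_, fun n hn => ?_, ?_⟩ <;>
    simp [Ym, PowerSeries.coeff_X]
  intro h; subst h; simp [Nat.even_iff] at hn

/-- The generator `X` of `B₂`. -/
noncomputable def x : S := ⟨Xm, Xm_mem⟩

/-- The generator `Y` of `B₂`. -/
noncomputable def y : S := ⟨Ym, Ym_mem⟩

lemma x_sq : x * x = 0 := by
  apply Subtype.ext
  show Xm * Xm = 0
  simp [Xm]
  ext i j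
  fin_cases i <;> fin_cases j <;> simp [Matrix.mul_apply, Fin.sum_univ_two]

end B2Model

/- STATEMENT 18: In `B₂ = ℚ⟨⟨X,Y⟩⟩/⟨X²,Y²⟩`, let
   `w = (XY)² - (YX)²Y + r(XY)³ - r²(YX)³ - 2r²(YX)³Y` (r a fixed positive integer).
   Then `(YX)²Y`, `(XY)²X` and `(XY)²` all lie in the two-sided ideal generated by `w`;
   consequently `⟨w⟩ = ⟨(XY)²⟩`, and the quotient `B₂/⟨(XY)²⟩` is an 8-dimensional
   ℚ-vector space with basis `1, X, Y, XY, YX, XYX, YXY, (YX)²` (every element is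
   congruent mod `⟨(XY)²⟩` to a unique ℚ-linear combination of these monomials). -/

namespace Stmt18

open B2Model

noncomputable def w (r : ℕ) : ↥S :=
  (x * y) ^ 2 - (y * x) ^ 2 * y + (r : ↥S) * (x * y) ^ 3
    - (r : ↥S) ^ 2 * (y * x) ^ 3 - 2 * (r : ↥S) ^ 2 * ((y * x) ^ 3 * y)

/-- The eight monomials `1, X, Y, XY, YX, XYX, YXY, (YX)²`. -/
noncomputable def e : Fin 8 → ↥S :=
  ![1, x, y, x * y, y * x, x * y * x, y * x * y, (y * x) ^ 2]

local notation "u" => (PowerSeries.X : R)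

lemma coe_mul (a b : ↥S) : ((a * b : ↥S) : A) = (a : A) * (b : A) := rfl

lemma val_x : (x : A) = !![0, u; 0, 0] := rfl
lemma val_y : (y : A) = !![0, 0; u, 0] := rfl

lemma y_sq : y * y = 0 := by
  apply Subtype.ext
  show Ym * Ym = 0
  simp [Ym, Matrix.mul_fin_two]
  ext i j
  fin_cases i <;> fin_cases j <;> simp

lemma val_xy : ((x * y : ↥S) : A) = !![u^2, 0; 0, 0] := by
  rw [coe_mul, val_x, val_y, Matrix.mul_fin_two]
  ext i j
  fin_cases i <;> fin_cases j <;> simp [sq]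

lemma val_yx : ((y * x : ↥S) : A) = !![0, 0; 0, u^2] := by
  rw [coe_mul, val_y, val_x, Matrix.mul_fin_two]
  ext i j
  fin_cases i <;> fin_cases j <;> simp [sq]

lemma val_xyx : ((x * y * x : ↥S) : A) = !![0, u^3; 0, 0] := by
  rw [coe_mul, val_xy, val_x, Matrix.mul_fin_two]
  ext i j
  fin_cases i <;> fin_cases j <;> simp [pow_succ]

lemma val_yxy : ((y * x * y : ↥S) : A) = !![0, 0; u^3, 0] := by
  rw [coe_mul, val_yx, val_y, Matrix.mul_fin_two]
  ext i j
  fin_cases i <;> fin_cases j <;> simp [pow_succ]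

lemma val_xy2 : (((x * y)^2 : ↥S) : A) = !![u^4, 0; 0, 0] := by
  rw [sq, coe_mul, val_xy, Matrix.mul_fin_two]
  ext i j : 1
  fin_cases i <;> fin_cases j <;> simp <;> ring

lemma val_yx2 : (((y * x)^2 : ↥S) : A) = !![0, 0; 0, u^4] := by
  rw [sq, coe_mul, val_yx, Matrix.mul_fin_two]
  ext i j : 1
  fin_cases i <;> fin_cases j <;> simp <;> ring
-- ring identities (pure regrouping)
lemma id_yxy2 : y * (x * y)^2 = (y * x)^2 * y := by
  simp [pow_succ, mul_assoc]

lemma id_xy3 : x * ((y * x)^2 * y) = (x * y)^3 := by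
  simp [pow_succ, mul_assoc]

lemma id_yx3 : ((y * x)^2 * y) * x = (y * x)^3 := by
  simp [pow_succ, mul_assoc]

lemma id_yx3y : y * ((x * y)^2 * (x * y)) = (y * x)^3 * y := by
  simp [pow_succ, mul_assoc]

lemma cast_pull (n : ℕ) (b : ↥S) : y * ((n : ↥S) * b) = (n : ↥S) * (y * b) := by
  rw [← mul_assoc, ← (Nat.cast_commute n y).eq, mul_assoc]

lemma two_pull (b : ↥S) : y * (2 * b) = 2 * (y * b) := by
  rw [two_mul, two_mul, mul_add]

lemma yy0 (a : ↥S) : y * (y * a) = 0 := by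
  rw [← mul_assoc, y_sq, zero_mul]

lemma hId2 (r : ℕ) : w r * y = -((r : ↥S)^2 * ((y * x)^3 * y)) := by
  simp [w, sub_mul, add_mul, mul_assoc, pow_succ, y_sq]

lemma hId1 (r : ℕ) : y * w r = (y * x)^2 * y + (r : ↥S) * ((y * x)^3 * y) := by
  simp [w, mul_sub, mul_add, mul_assoc, pow_succ, y_sq, cast_pull, two_pull, yy0]
lemma span_singleton_le {a : ↥S} {I : TwoSidedIdeal ↥S} (h : a ∈ I) :
    TwoSidedIdeal.span {a} ≤ I := fun _ hm =>
  TwoSidedIdeal.mem_span_iff.mp hm I (Set.singleton_subset_iff.mpr h)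

lemma rat_smul_mem {q : ℚ} {a : ↥S} {I : TwoSidedIdeal ↥S} (h : a ∈ I) : q • a ∈ I := by
  rw [Algebra.smul_def]
  exact I.mul_mem_left _ _ h

lemma w_mem (r : ℕ) : w r ∈ TwoSidedIdeal.span {w r} :=
  TwoSidedIdeal.subset_span rfl

lemma yx3y_mem (r : ℕ) (hr : 0 < r) :
    (y * x)^3 * y ∈ TwoSidedIdeal.span {w r} := by
  have hr2 : ((r : ℚ)^2) ≠ 0 := by positivity
  have hcast : ((r : ℚ)^2) • ((y * x)^3 * y) = (r : ↥S)^2 * ((y * x)^3 * y) := by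
    rw [Algebra.smul_def, map_pow, map_natCast]
  have key : (y * x)^3 * y = ((r : ℚ)^2)⁻¹ • (-(w r * y)) := by
    rw [hId2, neg_neg, ← hcast, smul_smul, inv_mul_cancel₀ hr2, one_smul]
  rw [key]
  exact rat_smul_mem ((TwoSidedIdeal.span {w r}).neg_mem
    ((TwoSidedIdeal.span {w r}).mul_mem_right _ _ (w_mem r)))

lemma yx2y_mem (r : ℕ) (hr : 0 < r) :
    (y * x)^2 * y ∈ TwoSidedIdeal.span {w r} := by
  have key : (y * x)^2 * y = y * w r - (r : ↥S) * ((y * x)^3 * y) := by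
    rw [hId1]; abel
  rw [key]
  exact (TwoSidedIdeal.span {w r}).sub_mem
    ((TwoSidedIdeal.span {w r}).mul_mem_left _ _ (w_mem r))
    ((TwoSidedIdeal.span {w r}).mul_mem_left _ _ (yx3y_mem r hr))

lemma xy2_mem (r : ℕ) (hr : 0 < r) :
    (x * y)^2 ∈ TwoSidedIdeal.span {w r} := by
  set I := TwoSidedIdeal.span {w r}
  have h1 : (x * y)^3 ∈ I := id_xy3 ▸ I.mul_mem_left _ _ (yx2y_mem r hr)
  have h2 : (y * x)^3 ∈ I := id_yx3 ▸ I.mul_mem_right _ _ (yx2y_mem r hr)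
  have key : (x * y)^2 = w r + (y * x)^2 * y - (r : ↥S) * (x * y)^3
      + (r : ↥S)^2 * (y * x)^3 + 2 * (r : ↥S)^2 * ((y * x)^3 * y) := by
    rw [w]; abel
  rw [key]
  exact I.add_mem (I.add_mem (I.sub_mem (I.add_mem (w_mem r) (yx2y_mem r hr))
    (I.mul_mem_left _ _ h1)) (I.mul_mem_left _ _ h2)) (I.mul_mem_left _ _ (yx3y_mem r hr))

lemma xy2x_mem (r : ℕ) (hr : 0 < r) :
    (x * y)^2 * x ∈ TwoSidedIdeal.span {w r} :=
  (TwoSidedIdeal.span {w r}).mul_mem_right _ _ (xy2_mem r hr)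

lemma span_eq (r : ℕ) (hr : 0 < r) :
    TwoSidedIdeal.span {w r} = TwoSidedIdeal.span {(x * y)^2} := by
  set I0 := TwoSidedIdeal.span {(x * y)^2}
  have hg : (x * y)^2 ∈ I0 := TwoSidedIdeal.subset_span rfl
  have h1 : (y * x)^2 * y ∈ I0 := id_yxy2 ▸ I0.mul_mem_left _ _ hg
  have h2 : (x * y)^3 ∈ I0 := by
    rw [pow_succ]; exact I0.mul_mem_right _ _ hg
  have h3 : (y * x)^3 ∈ I0 := id_yx3 ▸ I0.mul_mem_right _ _ h1
  have h4 : (y * x)^3 * y ∈ I0 := by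
    have : (x * y)^2 * (x * y) ∈ I0 := I0.mul_mem_right _ _ hg
    exact id_yx3y ▸ I0.mul_mem_left _ _ this
  have hw : w r ∈ I0 := by
    rw [w]
    exact I0.sub_mem (I0.sub_mem (I0.add_mem (I0.sub_mem hg h1) (I0.mul_mem_left _ _ h2))
      (I0.mul_mem_left _ _ h3)) (I0.mul_mem_left _ _ h4)
  exact le_antisymm (span_singleton_le hw) (span_singleton_le (xy2_mem r hr))
lemma coe_add (a b : ↥S) : ((a + b : ↥S) : A) = (a : A) + (b : A) := rfl
lemma coe_sub (a b : ↥S) : ((a - b : ↥S) : A) = (a : A) - (b : A) := rfl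
lemma coe_neg (a : ↥S) : ((-a : ↥S) : A) = -(a : A) := rfl
lemma coe_smul (q : ℚ) (a : ↥S) : ((q • a : ↥S) : A) = q • (a : A) := rfl
lemma coe_zero : ((0 : ↥S) : A) = 0 := rfl

open PowerSeries in
lemma coeff_mul_bound {φ ψ : R} {a b n : ℕ}
    (hφ : ∀ m < a, coeff m φ = 0) (hψ : ∀ m < b, coeff m ψ = 0)
    (hn : n < a + b) : coeff n (φ * ψ) = 0 := by
  rw [PowerSeries.coeff_mul]
  refine Finset.sum_eq_zero fun pq hpq => ?_
  have h := Finset.HasAntidiagonal.mem_antidiagonal.mp hpq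
  rcases lt_or_ge pq.1 a with h1 | h1
  · rw [hφ _ h1, zero_mul]
  · rw [hψ _ (by omega), mul_zero]

open PowerSeries in
lemma lb01 (M : ↥S) : ∀ m < 1, coeff m ((M : A) 0 1) = 0 := by
  intro m hm
  interval_cases m
  exact M.2.2.2.1 0 ⟨0, rfl⟩

open PowerSeries in
lemma lb10 (M : ↥S) : ∀ m < 1, coeff m ((M : A) 1 0) = 0 := by
  intro m hm
  interval_cases m
  exact M.2.2.2.2.1 0 ⟨0, rfl⟩

lemma lb0 (φ : R) : ∀ m < 0, PowerSeries.coeff m φ = 0 :=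
  fun m hm => absurd hm (Nat.not_lt_zero m)

lemma entry_mul (a b : ↥S) (i j : Fin 2) :
    ((a * b : ↥S) : A) i j = (a : A) i 0 * (b : A) 0 j + (a : A) i 1 * (b : A) 1 j := by
  rw [coe_mul, Matrix.mul_apply, Fin.sum_univ_two]

open PowerSeries in
/-- The candidate ideal: entries vanishing to high order. -/
def Jcar : Set ↥S :=
  {M | (∀ n < 4, coeff n ((M : A) 0 0) = 0) ∧ (∀ n < 5, coeff n ((M : A) 0 1) = 0) ∧
    (∀ n < 5, coeff n ((M : A) 1 0) = 0) ∧ (∀ n < 6, coeff n ((M : A) 1 1) = 0)}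

open PowerSeries in
noncomputable def J : TwoSidedIdeal ↥S := TwoSidedIdeal.mk' Jcar
  (by refine ⟨?_, ?_, ?_, ?_⟩ <;> intro n _ <;> simp [coe_zero])
  (by
    rintro a b ⟨a1, a2, a3, a4⟩ ⟨b1, b2, b3, b4⟩
    refine ⟨?_, ?_, ?_, ?_⟩ <;> intro n hn <;>
      simp only [coe_add, Matrix.add_apply, map_add]
    · rw [a1 n hn, b1 n hn, add_zero]
    · rw [a2 n hn, b2 n hn, add_zero]
    · rw [a3 n hn, b3 n hn, add_zero]
    · rw [a4 n hn, b4 n hn, add_zero])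
  (by
    rintro a ⟨a1, a2, a3, a4⟩
    refine ⟨?_, ?_, ?_, ?_⟩ <;> intro n hn <;>
      simp only [coe_neg, Matrix.neg_apply, map_neg, neg_eq_zero]
    exacts [a1 n hn, a2 n hn, a3 n hn, a4 n hn])
  (by
    rintro a b ⟨b1, b2, b3, b4⟩
    refine ⟨?_, ?_, ?_, ?_⟩ <;> intro n hn <;> rw [entry_mul, map_add]
    · rw [coeff_mul_bound (lb0 _) b1 (by omega),
        coeff_mul_bound (lb01 a) b3 (by omega), add_zero]
    · rw [coeff_mul_bound (lb0 _) b2 (by omega),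
        coeff_mul_bound (lb01 a) b4 (by omega), add_zero]
    · rw [coeff_mul_bound (lb10 a) b1 (by omega),
        coeff_mul_bound (lb0 _) b3 (by omega), add_zero]
    · rw [coeff_mul_bound (lb10 a) b2 (by omega),
        coeff_mul_bound (lb0 _) b4 (by omega), add_zero])
  (by
    rintro a b ⟨a1, a2, a3, a4⟩
    refine ⟨?_, ?_, ?_, ?_⟩ <;> intro n hn <;> rw [entry_mul, map_add]
    · rw [coeff_mul_bound a1 (lb0 _) (by omega),
        coeff_mul_bound a2 (lb10 b) (by omega), add_zero]
    · rw [coeff_mul_bound a1 (lb01 b) (by omega),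
        coeff_mul_bound a2 (lb0 _) (by omega), add_zero]
    · rw [coeff_mul_bound a3 (lb0 _) (by omega),
        coeff_mul_bound a4 (lb10 b) (by omega), add_zero]
    · rw [coeff_mul_bound a3 (lb01 b) (by omega),
        coeff_mul_bound a4 (lb0 _) (by omega), add_zero])

open PowerSeries in
lemma coe_pow (a : ↥S) (n : ℕ) : ((a ^ n : ↥S) : A) = (a : A) ^ n :=
  SubmonoidClass.coe_pow a n

lemma xy2_mem_J : (x * y)^2 ∈ J := by
  refine (TwoSidedIdeal.mem_mk' Jcar _ _ _ _ _ _).mpr ?_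
  refine ⟨?_, ?_, ?_, ?_⟩ <;> intro n hn <;>
    rw [val_xy2] <;> simp [PowerSeries.coeff_X_pow] <;> omega

lemma span_le_J : ∀ m ∈ TwoSidedIdeal.span {(x * y)^2}, m ∈ Jcar := by
  intro m hm
  have := TwoSidedIdeal.mem_span_iff.mp hm J (Set.singleton_subset_iff.mpr xy2_mem_J)
  exact (TwoSidedIdeal.mem_mk' Jcar _ _ _ _ _ _).mp this
open PowerSeries in
lemma J_le_span (M : ↥S) (hM : M ∈ Jcar) : M ∈ TwoSidedIdeal.span {(x * y)^2} := by
  obtain ⟨h00, h01, h10, h11⟩ := hM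
  obtain ⟨c1, c2, c3, c4, c5⟩ := M.2
  obtain ⟨f, hf⟩ := (X_pow_dvd_iff (n := 4)).mpr h00
  obtain ⟨g, hg⟩ := (X_pow_dvd_iff (n := 4)).mpr (fun m hm => h01 m (by omega))
  obtain ⟨h', hh⟩ := (X_pow_dvd_iff (n := 4)).mpr (fun m hm => h10 m (by omega))
  obtain ⟨e', he⟩ := (X_pow_dvd_iff (n := 6)).mpr h11
  have hfodd : ∀ n, Odd n → coeff n f = 0 := fun n hn => by
    rw [← coeff_X_pow_mul f 4 n, ← hf]
    exact c1 (n + 4) (by rw [Nat.odd_iff] at *; omega)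
  have hgev : ∀ n, Even n → coeff n g = 0 := fun n hn => by
    rw [← coeff_X_pow_mul g 4 n, ← hg]
    exact c3 (n + 4) (by rw [Nat.even_iff] at *; omega)
  have hhev : ∀ n, Even n → coeff n h' = 0 := fun n hn => by
    rw [← coeff_X_pow_mul h' 4 n, ← hh]
    exact c4 (n + 4) (by rw [Nat.even_iff] at *; omega)
  have heodd : ∀ n, Odd n → coeff n e' = 0 := fun n hn => by
    rw [← coeff_X_pow_mul e' 6 n, ← he]
    exact c2 (n + 6) (by rw [Nat.odd_iff] at *; omega)
  have hB1 : !![f, g; 0, f] ∈ S := by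
    refine ⟨fun n hn => ?_, fun n hn => ?_, fun n hn => ?_, fun n hn => ?_, ?_⟩
    · exact hfodd n hn
    · exact hfodd n hn
    · exact hgev n hn
    · simp
    · rfl
  have hA2 : !![0, 0; h', 0] ∈ S := by
    refine ⟨fun n hn => ?_, fun n hn => ?_, fun n hn => ?_, fun n hn => ?_, ?_⟩
    · simp
    · simp
    · simp
    · exact hhev n hn
    · rfl
  have hB3 : !![0, PowerSeries.X * e'; 0, 0] ∈ S := by
    refine ⟨fun n hn => ?_, fun n hn => ?_, fun n hn => ?_, fun n hn => ?_, ?_⟩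
    · simp
    · simp
    · show coeff n (PowerSeries.X * e') = 0
      match n, hn with
      | 0, _ => exact coeff_zero_X_mul e'
      | (k+1), hn =>
        rw [coeff_succ_X_mul]
        exact heodd k (by rw [Nat.even_iff] at hn; rw [Nat.odd_iff]; omega)
    · simp
    · rfl
  have hdec : M = (x * y)^2 * ⟨!![f, g; 0, f], hB1⟩
      + (⟨!![0, 0; h', 0], hA2⟩ : ↥S) * (x * y)^2
      + y * ((x * y)^2 * ⟨!![0, PowerSeries.X * e'; 0, 0], hB3⟩) := by
    apply Subtype.ext
    show (M : A) = (((x * y)^2 : ↥S) : A) * !![f, g; 0, f]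
      + !![0, 0; h', 0] * (((x * y)^2 : ↥S) : A)
      + (y : A) * ((((x * y)^2 : ↥S) : A) * !![0, PowerSeries.X * e'; 0, 0])
    rw [val_xy2, val_y]
    ext i j
    fin_cases i <;> fin_cases j <;>
      simp [Matrix.mul_fin_two, hf, hg, hh, he] <;> ring
  rw [hdec]
  have hxy2 : (x * y)^2 ∈ TwoSidedIdeal.span {(x * y)^2} := TwoSidedIdeal.subset_span rfl
  set I0 := TwoSidedIdeal.span {(x * y)^2}
  exact I0.add_mem (I0.add_mem (I0.mul_mem_right _ _ hxy2) (I0.mul_mem_left _ _ hxy2))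
    (I0.mul_mem_left _ _ (I0.mul_mem_right _ _ hxy2))
lemma coe_one : ((1 : ↥S) : A) = 1 := rfl

lemma val_sum (c : Fin 8 → ℚ) : ((∑ i, c i • e i : ↥S) : A) =
    c 0 • (1 : A) + c 1 • !![0, u; 0, 0] + c 2 • !![0, 0; u, 0]
    + c 3 • !![u^2, 0; 0, 0] + c 4 • !![0, 0; 0, u^2]
    + c 5 • !![0, u^3; 0, 0] + c 6 • !![0, 0; u^3, 0] + c 7 • !![0, 0; 0, u^4] := by
  have e0 : e 0 = 1 := rfl
  have e1 : e 1 = x := rfl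
  have e2 : e 2 = y := rfl
  have e3 : e 3 = x * y := rfl
  have e4 : e 4 = y * x := rfl
  have e5 : e 5 = x * y * x := rfl
  have e6 : e 6 = y * x * y := rfl
  have e7 : e 7 = (y * x)^2 := rfl
  rw [Fin.sum_univ_eight, e0, e1, e2, e3, e4, e5, e6, e7,
    coe_add, coe_add, coe_add, coe_add, coe_add, coe_add, coe_add,
    coe_smul, coe_smul, coe_smul, coe_smul, coe_smul, coe_smul, coe_smul, coe_smul,
    coe_one, val_x, val_y, val_xy, val_yx, val_xyx, val_yxy, val_yx2]

lemma sum00 (c : Fin 8 → ℚ) : ((∑ i, c i • e i : ↥S) : A) 0 0 = c 0 • (1 : R) + c 3 • u^2 := by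
  rw [val_sum c]
  simp [Matrix.add_apply, Matrix.smul_apply, Matrix.one_apply]

lemma sum01 (c : Fin 8 → ℚ) : ((∑ i, c i • e i : ↥S) : A) 0 1 = c 1 • u + c 5 • u^3 := by
  rw [val_sum c]
  simp [Matrix.add_apply, Matrix.smul_apply, Matrix.one_apply]

lemma sum10 (c : Fin 8 → ℚ) : ((∑ i, c i • e i : ↥S) : A) 1 0 = c 2 • u + c 6 • u^3 := by
  rw [val_sum c]
  simp [Matrix.add_apply, Matrix.smul_apply, Matrix.one_apply]

lemma sum11 (c : Fin 8 → ℚ) :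
    ((∑ i, c i • e i : ↥S) : A) 1 1 = c 0 • (1 : R) + c 4 • u^2 + c 7 • u^4 := by
  rw [val_sum c]
  simp [Matrix.add_apply, Matrix.smul_apply, Matrix.one_apply]
open PowerSeries in
lemma part_c (s : ↥S) : ∃ c : Fin 8 → ℚ,
    s - ∑ i, c i • e i ∈ TwoSidedIdeal.span {(x * y) ^ 2} := by
  obtain ⟨h1, h2, h3, h4, h5⟩ := s.2
  have o1 : Odd 1 := ⟨0, rfl⟩
  have o3 : Odd 3 := ⟨1, rfl⟩
  have o5 : Odd 5 := ⟨2, rfl⟩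
  have ev0 : Even (0 : ℕ) := ⟨0, rfl⟩
  have ev2 : Even (2 : ℕ) := ⟨1, rfl⟩
  have ev4 : Even (4 : ℕ) := ⟨2, rfl⟩
  set c : Fin 8 → ℚ := ![coeff 0 ((s : A) 0 0), coeff 1 ((s : A) 0 1),
    coeff 1 ((s : A) 1 0), coeff 2 ((s : A) 0 0), coeff 2 ((s : A) 1 1),
    coeff 3 ((s : A) 0 1), coeff 3 ((s : A) 1 0), coeff 4 ((s : A) 1 1)] with hcdef
  have c0 : c 0 = coeff 0 ((s : A) 0 0) := rfl
  have c1 : c 1 = coeff 1 ((s : A) 0 1) := rfl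
  have c2 : c 2 = coeff 1 ((s : A) 1 0) := rfl
  have c3 : c 3 = coeff 2 ((s : A) 0 0) := rfl
  have c4 : c 4 = coeff 2 ((s : A) 1 1) := rfl
  have c5 : c 5 = coeff 3 ((s : A) 0 1) := rfl
  have c6 : c 6 = coeff 3 ((s : A) 1 0) := rfl
  have c7 : c 7 = coeff 4 ((s : A) 1 1) := rfl
  refine ⟨c, J_le_span _ ⟨?_, ?_, ?_, ?_⟩⟩ <;> intro n hn
  · rw [coe_sub, Matrix.sub_apply, map_sub, sum00]
    interval_cases n <;>
      simp [c0, c1, c2, c3, c4, c5, c6, c7, coeff_one, coeff_X, coeff_X_pow, h1 1 o1, h1 3 o3]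
  · rw [coe_sub, Matrix.sub_apply, map_sub, sum01]
    interval_cases n <;>
      simp [c0, c1, c2, c3, c4, c5, c6, c7, coeff_X, coeff_X_pow, h3 0 ev0, h3 2 ev2, h3 4 ev4]
  · rw [coe_sub, Matrix.sub_apply, map_sub, sum10]
    interval_cases n <;>
      simp [c0, c1, c2, c3, c4, c5, c6, c7, coeff_X, coeff_X_pow, h4 0 ev0, h4 2 ev2, h4 4 ev4]
  · rw [coe_sub, Matrix.sub_apply, map_sub, sum11]
    interval_cases n <;>
      simp [c0, c1, c2, c3, c4, c5, c6, c7, coeff_one, coeff_X, coeff_X_pow, coeff_zero_eq_constantCoeff, h2 1 o1, h2 3 o3, h2 5 o5, h5]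

open PowerSeries in
lemma part_d (c : Fin 8 → ℚ)
    (hc : (∑ i, c i • e i) ∈ TwoSidedIdeal.span {(x * y) ^ 2}) : c = 0 := by
  obtain ⟨h00, h01, h10, h11⟩ := span_le_J _ hc
  have k0 := h00 0 (by omega)
  have k3 := h00 2 (by omega)
  have k1 := h01 1 (by omega)
  have k5 := h01 3 (by omega)
  have k2 := h10 1 (by omega)
  have k6 := h10 3 (by omega)
  have k4 := h11 2 (by omega)
  have k7 := h11 4 (by omega)
  rw [sum00] at k0 k3
  rw [sum01] at k1 k5
  rw [sum10] at k2 k6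
  rw [sum11] at k4 k7
  simp [coeff_one, coeff_X, coeff_X_pow] at k0 k1 k2 k3 k4 k5 k6 k7
  funext i
  fin_cases i
  exacts [k0, k1, k2, k3, k4, k5, k6, k7]
theorem ideal_of_w (r : ℕ) (hr : 0 < r) :
    (y * x) ^ 2 * y ∈ TwoSidedIdeal.span {w r} ∧
    (x * y) ^ 2 * x ∈ TwoSidedIdeal.span {w r} ∧
    (x * y) ^ 2 ∈ TwoSidedIdeal.span {w r} ∧
    TwoSidedIdeal.span {w r} = TwoSidedIdeal.span {(x * y) ^ 2} ∧
    (∀ s : ↥S, ∃ c : Fin 8 → ℚ,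
      s - ∑ i, c i • e i ∈ TwoSidedIdeal.span {(x * y) ^ 2}) ∧
    (∀ c : Fin 8 → ℚ, (∑ i, c i • e i) ∈ TwoSidedIdeal.span {(x * y) ^ 2} → c = 0) :=
  ⟨yx2y_mem r hr, xy2x_mem r hr, xy2_mem r hr, span_eq r hr, part_c, part_d⟩

end Stmt18
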